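/- Let P be a nonempty closed subset of 2^ω with tree T_P, let σ ∈ T_P, and let n ≥ |σ|. If every extension τ ⪰ σ with τ ∈ T_P↾n satisfies θ_P(τ) = θ_P(σ) + ℓ, then σ has exactly 2^ℓ extensions in T_P↾n. -/

import Mathlib

open MeasureTheory Filter

noncomputable section

/-- The cylinder (basic clopen set) determined by a finite binary string. -/
def cyl (σ : List Bool) : Set (ℕ → Bool) :=
  {X | ∀ i, i < σ.length → X i = σ.getD i false}

/-- σ is an extendible node of P, i.e. σ ∈ T_P. -/
def extn (P : Set (ℕ → Bool)) (σ : List Bool) : Prop :=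
  (cyl σ ∩ P).Nonempty

/-- The level-n strings of the tree of extendible nodes, T_P ↾ n. -/
def level (P : Set (ℕ → Bool)) (n : ℕ) : Set (List Bool) :=
  {σ | σ.length = n ∧ extn P σ}

/-- #(T_P ↾ n). -/
def levelCard (P : Set (ℕ → Bool)) (n : ℕ) : ℕ :=
  (level P n).ncard

/-- The clopen set [T_P ↾ n] generated by the level-n extendible nodes. -/
def levelUnion (P : Set (ℕ → Bool)) (n : ℕ) : Set (ℕ → Bool) :=
  ⋃ σ ∈ level P n, cyl σ

/-- The prefix of σ of length m+1 with its last bit flipped, i.e. (σ↾(m+1))^↷. -/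
def flipAt (σ : List Bool) (m : ℕ) : List Bool :=
  σ.take m ++ [!σ.getD m false]

/-- θ_P(σ): the number of initial segments of σ whose last-bit-flipped sibling is in T_P. -/
def theta (P : Set (ℕ → Bool)) (σ : List Bool) : ℕ :=
  {m | m < σ.length ∧ extn P (flipAt σ m)}.ncard

/-- The number of extensions of σ in T_P ↾ n. -/
def extCard (P : Set (ℕ → Bool)) (σ : List Bool) (n : ℕ) : ℕ :=
  {τ | τ.length = n ∧ extn P τ ∧ σ <+: τ}.ncard

/-- X ↾ n as a finite string. -/
def prefixList (X : ℕ → Bool) (n : ℕ) : List Bool :=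
  List.ofFn (fun i : Fin n => X i)

/-- Interleaving X ⊕ Y of two infinite sequences. -/
def seqInterleave (X Y : ℕ → Bool) : ℕ → Bool :=
  fun n => if n % 2 = 0 then X (n / 2) else Y (n / 2)

/-- Interleaving σ ⊕ τ of two finite strings (of equal length). -/
def interleave : List Bool → List Bool → List Bool
  | a :: σ, b :: τ => a :: b :: interleave σ τ
  | _, _ => []

/-- The product P₀ ⊗ P₁ = {X ⊕ Y : X ∈ P₀, Y ∈ P₁}. -/
def prodClass (P₀ P₁ : Set (ℕ → Bool)) : Set (ℕ → Bool) :=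
  {Z | ∃ X ∈ P₀, ∃ Y ∈ P₁, Z = seqInterleave X Y}


lemma cyl_anti {σ τ : List Bool} (h : σ <+: τ) : cyl τ ⊆ cyl σ := by
  obtain ⟨t, rfl⟩ := h
  intro X hX i hi
  rw [hX i (by rw [List.length_append]; omega), List.getD_append _ _ _ _ hi]

lemma extn_of_prefix {P : Set (ℕ → Bool)} {σ τ : List Bool} (h : σ <+: τ)
    (hτ : extn P τ) : extn P σ := by
  obtain ⟨X, hX, hXP⟩ := hτ
  exact ⟨X, cyl_anti h hX, hXP⟩

lemma length_prefixList (X : ℕ → Bool) (n : ℕ) : (prefixList X n).length = n := by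
  simp [prefixList]

lemma mem_cyl_prefixList (X : ℕ → Bool) (n : ℕ) : X ∈ cyl (prefixList X n) := by
  intro i hi
  rw [length_prefixList] at hi
  rw [List.getD_eq_getElem _ _ (by rw [length_prefixList]; exact hi)]
  simp [prefixList]

lemma prefix_prefixList {σ : List Bool} {X : ℕ → Bool} {n : ℕ}
    (hX : X ∈ cyl σ) (hn : σ.length ≤ n) : σ <+: prefixList X n := by
  rw [List.prefix_iff_eq_take]
  apply List.ext_getElem
  · rw [List.length_take, length_prefixList]; omega
  · intro i h1 h2
    have hi : i < σ.length := h1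
    have hin : i < n := lt_of_lt_of_le hi hn
    rw [List.getElem_take]
    have : (prefixList X n)[i]'(by rw [length_prefixList]; exact hin) = X i := by
      simp [prefixList]
    rw [this, hX i hi, List.getD_eq_getElem _ _ hi]

lemma exists_ext {P : Set (ℕ → Bool)} {σ : List Bool} {n : ℕ}
    (hσ : extn P σ) (hn : σ.length ≤ n) :
    ∃ τ, τ.length = n ∧ extn P τ ∧ σ <+: τ := by
  obtain ⟨X, hX, hXP⟩ := hσ
  exact ⟨prefixList X n, length_prefixList X n,
    ⟨X, mem_cyl_prefixList X n, hXP⟩, prefix_prefixList hX hn⟩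

lemma flipAt_eq_of_prefix {σ τ : List Bool} {m : ℕ} (h : σ <+: τ)
    (hm : m < σ.length) : flipAt τ m = flipAt σ m := by
  obtain ⟨t, rfl⟩ := h
  unfold flipAt
  rw [List.take_append_of_le_length (le_of_lt hm), List.getD_append _ _ _ _ hm]

lemma thetaSet_finite (P : Set (ℕ → Bool)) (σ : List Bool) :
    {m | m < σ.length ∧ extn P (flipAt σ m)}.Finite :=
  (Set.finite_Iio σ.length).subset (fun _ hm => hm.1)

lemma extSet_finite (P : Set (ℕ → Bool)) (σ : List Bool) (n : ℕ) :
    {τ | τ.length = n ∧ extn P τ ∧ σ <+: τ}.Finite :=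
  (List.finite_length_eq Bool n).subset (fun _ hm => hm.1)

lemma theta_mono {P : Set (ℕ → Bool)} {σ τ : List Bool} (h : σ <+: τ) :
    theta P σ ≤ theta P τ := by
  apply Set.ncard_le_ncard _ (thetaSet_finite P τ)
  rintro m ⟨hm, he⟩
  exact ⟨lt_of_lt_of_le hm h.length_le, by rwa [flipAt_eq_of_prefix h hm]⟩

lemma flipAt_append (σ : List Bool) (b : Bool) :
    flipAt (σ ++ [b]) σ.length = σ ++ [!b] := by
  unfold flipAt
  rw [List.take_left, List.getD_append_right _ _ _ _ le_rfl]
  simp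

lemma theta_append_pos (P : Set (ℕ → Bool)) (σ : List Bool) (b : Bool)
    (hb : extn P (σ ++ [!b])) :
    theta P (σ ++ [b]) = theta P σ + 1 := by
  have hlen : (σ ++ [b]).length = σ.length + 1 := by simp
  have hflip : ∀ m < σ.length, flipAt (σ ++ [b]) m = flipAt σ m :=
    fun m hm => flipAt_eq_of_prefix ⟨[b], rfl⟩ hm
  have hset : {m | m < (σ ++ [b]).length ∧ extn P (flipAt (σ ++ [b]) m)} =
        insert σ.length {m | m < σ.length ∧ extn P (flipAt σ m)} := by
      ext m
      simp only [Set.mem_insert_iff, Set.mem_setOf_eq, hlen]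
      constructor
      · rintro ⟨hm, he⟩
        rcases Nat.lt_or_ge m σ.length with hm' | hm'
        · exact Or.inr ⟨hm', by rwa [hflip m hm'] at he⟩
        · exact Or.inl (by omega)
      · rintro (rfl | ⟨hm, he⟩)
        · exact ⟨by omega, by rwa [flipAt_append]⟩
        · exact ⟨by omega, by rwa [hflip m hm]⟩
  rw [theta, hset, Set.ncard_insert_of_notMem (by simp) (thetaSet_finite P σ)]
  rfl

lemma theta_append_neg (P : Set (ℕ → Bool)) (σ : List Bool) (b : Bool)
    (hb : ¬ extn P (σ ++ [!b])) :
    theta P (σ ++ [b]) = theta P σ := by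
  have hlen : (σ ++ [b]).length = σ.length + 1 := by simp
  have hflip : ∀ m < σ.length, flipAt (σ ++ [b]) m = flipAt σ m :=
    fun m hm => flipAt_eq_of_prefix ⟨[b], rfl⟩ hm
  have hset : {m | m < (σ ++ [b]).length ∧ extn P (flipAt (σ ++ [b]) m)} =
        {m | m < σ.length ∧ extn P (flipAt σ m)} := by
      ext m
      simp only [Set.mem_setOf_eq, hlen]
      constructor
      · rintro ⟨hm, he⟩
        rcases Nat.lt_or_ge m σ.length with hm' | hm'
        · exact ⟨hm', by rwa [hflip m hm'] at he⟩
        · have : m = σ.length := by omega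
          subst this
          rw [flipAt_append] at he
          exact absurd he hb
      · rintro ⟨hm, he⟩
        exact ⟨by omega, by rwa [hflip m hm]⟩
  rw [theta, hset]
  rfl

lemma child_prefix {σ τ : List Bool} (h : σ <+: τ) (hl : σ.length < τ.length) :
    ∃ b, σ ++ [b] <+: τ := by
  obtain ⟨t, rfl⟩ := h
  have ht : t ≠ [] := by rintro rfl; simp at hl
  obtain ⟨a, t', rfl⟩ := List.exists_cons_of_ne_nil ht
  exact ⟨a, t', by simp⟩

lemma prefix_bit_eq {σ τ : List Bool} {b : Bool} (h : σ ++ [b] <+: τ) :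
    τ.getD σ.length false = b := by
  have hl : σ.length < (σ ++ [b]).length := by simp
  have := h.getElem (i := σ.length) hl
  rw [List.getD_eq_getElem _ _ (lt_of_lt_of_le hl h.length_le), ← this]
  simp

lemma key (P : Set (ℕ → Bool)) : ∀ (k : ℕ) (σ : List Bool) (ℓ : ℕ), extn P σ →
    (∀ τ : List Bool, τ.length = σ.length + k → extn P τ → σ <+: τ →
      theta P τ = theta P σ + ℓ) →
    extCard P σ (σ.length + k) = 2 ^ ℓ := by
  intro k
  induction k with
  | zero =>
    intro σ ℓ hσ h
    have hℓ : ℓ = 0 := by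
      have := h σ rfl hσ (List.prefix_refl σ)
      omega
    subst hℓ
    have hset : {τ | τ.length = σ.length + 0 ∧ extn P τ ∧ σ <+: τ} = {σ} := by
      ext τ
      simp only [Set.mem_setOf_eq, Set.mem_singleton_iff, Nat.add_zero]
      constructor
      · rintro ⟨hl, _, hp⟩
        exact (hp.eq_of_length (by omega)).symm
      · rintro rfl
        exact ⟨rfl, hσ, List.prefix_refl _⟩
    rw [extCard, hset, Set.ncard_singleton, pow_zero]
  | succ k ih =>
    intro σ ℓ hσ h
    -- there is an extendible child
    obtain ⟨τ0, hτ0l, hτ0e, hτ0p⟩ := exists_ext hσ (Nat.le_succ σ.length)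
    obtain ⟨b₀, hb₀⟩ := child_prefix hτ0p (by omega)
    have hb₀e : extn P (σ ++ [b₀]) := extn_of_prefix hb₀ hτ0e
    have hclen : ∀ b : Bool, (σ ++ [b]).length = σ.length + 1 := by simp
    by_cases hother : extn P (σ ++ [!b₀])
    · -- both children extendible
      have hboth : ∀ b : Bool, extn P (σ ++ [b]) := by
        intro b
        rcases eq_or_ne b b₀ with rfl | hne
        · exact hb₀e
        · have : b = !b₀ := by cases b <;> cases b₀ <;> simp_all
          rw [this]; exact hother
      have hθc : ∀ b : Bool, theta P (σ ++ [b]) = theta P σ + 1 := by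
        intro b
        exact theta_append_pos P σ b (hboth _)
      -- ℓ ≥ 1
      obtain ⟨τ1, hτ1l, hτ1e, hτ1p⟩ := exists_ext (hboth false)
        (by rw [hclen]; omega : (σ ++ [false]).length ≤ σ.length + (k + 1))
      have hστ1 : σ <+: τ1 := ((σ.prefix_append [false]).trans hτ1p)
      have h1 := h τ1 hτ1l hτ1e hστ1
      have h2 : theta P (σ ++ [false]) ≤ theta P τ1 := theta_mono hτ1p
      have hℓ1 : 1 ≤ ℓ := by rw [hθc false] at h2; omega
      obtain ⟨ℓ', rfl⟩ : ∃ ℓ', ℓ = ℓ' + 1 := ⟨ℓ - 1, by omega⟩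
      -- IH on both children
      have hchild : ∀ b : Bool, extCard P (σ ++ [b]) (σ.length + (k + 1)) = 2 ^ ℓ' := by
        intro b
        have := ih (σ ++ [b]) ℓ' (hboth b) (fun τ hl he hp => by
          rw [h τ (by rw [hclen] at hl; omega) he ((σ.prefix_append [b]).trans hp),
            hθc b]
          ring)
        rw [hclen] at this
        rwa [show σ.length + 1 + k = σ.length + (k + 1) from by omega] at this
      -- split the extension set
      have hsplit : {τ | τ.length = σ.length + (k + 1) ∧ extn P τ ∧ σ <+: τ} =
          {τ | τ.length = σ.length + (k + 1) ∧ extn P τ ∧ σ ++ [false] <+: τ} ∪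
          {τ | τ.length = σ.length + (k + 1) ∧ extn P τ ∧ σ ++ [true] <+: τ} := by
        ext τ
        simp only [Set.mem_setOf_eq, Set.mem_union]
        constructor
        · rintro ⟨hl, he, hp⟩
          obtain ⟨b, hb⟩ := child_prefix hp (by omega)
          cases b
          · exact Or.inl ⟨hl, he, hb⟩
          · exact Or.inr ⟨hl, he, hb⟩
        · rintro (⟨hl, he, hp⟩ | ⟨hl, he, hp⟩) <;>
            exact ⟨hl, he, (σ.prefix_append _).trans hp⟩
      have hdisj : Disjoint
          {τ | τ.length = σ.length + (k + 1) ∧ extn P τ ∧ σ ++ [false] <+: τ}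
          {τ | τ.length = σ.length + (k + 1) ∧ extn P τ ∧ σ ++ [true] <+: τ} := by
        rw [Set.disjoint_left]
        rintro τ ⟨_, _, hp0⟩ ⟨_, _, hp1⟩
        have e0 := prefix_bit_eq hp0
        have e1 := prefix_bit_eq hp1
        rw [e0] at e1
        exact Bool.false_ne_true e1
      rw [extCard, hsplit,
        Set.ncard_union_eq hdisj (extSet_finite P _ _) (extSet_finite P _ _)]
      have hf := hchild false
      have ht := hchild true
      rw [extCard] at hf ht
      rw [hf, ht]
      ring
    · -- only one child extendible
      have hθc : theta P (σ ++ [b₀]) = theta P σ := by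
        exact theta_append_neg P σ b₀ hother
      have hset : {τ | τ.length = σ.length + (k + 1) ∧ extn P τ ∧ σ <+: τ} =
          {τ | τ.length = σ.length + (k + 1) ∧ extn P τ ∧ σ ++ [b₀] <+: τ} := by
        ext τ
        simp only [Set.mem_setOf_eq]
        constructor
        · rintro ⟨hl, he, hp⟩
          obtain ⟨b, hb⟩ := child_prefix hp (by omega)
          have hbb : b = b₀ := by
            by_contra hne
            have : b = !b₀ := by cases b <;> cases b₀ <;> simp_all
            subst this
            exact hother (extn_of_prefix hb he)
          subst hbb
          exact ⟨hl, he, hb⟩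
        · rintro ⟨hl, he, hp⟩
          exact ⟨hl, he, (σ.prefix_append _).trans hp⟩
      have := ih (σ ++ [b₀]) ℓ hb₀e (fun τ hl he hp => by
        rw [h τ (by rw [hclen] at hl; omega) he ((σ.prefix_append [b₀]).trans hp), hθc])
      rw [hclen] at this
      rw [show σ.length + 1 + k = σ.length + (k + 1) from by omega] at this
      rw [extCard, hset, ← extCard, this]

theorem stmt4 (P : Set (ℕ → Bool)) (hPne : P.Nonempty) (hPc : IsClosed P)
    (σ : List Bool) (hσ : extn P σ) (n ℓ : ℕ) (hn : σ.length ≤ n)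
    (h : ∀ τ : List Bool, τ.length = n → extn P τ → σ <+: τ →
      theta P τ = theta P σ + ℓ) :
    extCard P σ n = 2 ^ ℓ := by
  obtain ⟨k, rfl⟩ : ∃ k, n = σ.length + k := ⟨n - σ.length, by omega⟩
  exact key P k σ ℓ hσ (fun τ hl he hp => h τ hl he hp)
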